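/- Let P₀ and P₁ be probability distributions on a finite set Σ with the same support, let δ > 0, ε > 0 with 10ε < δ, and suppose ∑_m |P₁(m) - P₀(m)| ≤ ε and for every m with P₁(m) ≠ P₀(m), both P₀(m) ≥ δ and P₁(m) ≥ δ. Then KL(P₀, P₁) ≤ 0.79 · ε²/δ, where KL uses base-2 logarithms. -/

import Mathlib

open Real

lemma logA {x : ℝ} (hx : 1 ≤ x) : Real.log x ≤ (x - x⁻¹) / 2 := by
  have key : MonotoneOn (fun y : ℝ => (y - y⁻¹) / 2 - Real.log y) (Set.Ici 1) := by
    have hderiv : ∀ y ∈ Set.Ioi (1:ℝ), HasDerivAt (fun y : ℝ => (y - y⁻¹) / 2 - Real.log y)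
        ((1 - -(y ^ 2)⁻¹) / 2 - y⁻¹) y := by
      intro y hy
      have hy0 : y ≠ 0 := by have : (1:ℝ) < y := hy; linarith
      exact (((hasDerivAt_id y).sub (hasDerivAt_inv hy0)).div_const 2).sub
        (Real.hasDerivAt_log hy0)
    apply monotoneOn_of_deriv_nonneg (convex_Ici 1)
    · apply ContinuousOn.sub
      · exact (continuousOn_id.sub (continuousOn_inv₀.mono (by
          intro y hy; simp only [Set.mem_compl_iff, Set.mem_singleton_iff]
          have : (1:ℝ) ≤ y := hy; intro h; simp [h] at this; linarith))).div_const 2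
      · exact Real.continuousOn_log.mono (by
          intro y hy; simp only [Set.mem_compl_iff, Set.mem_singleton_iff]
          have : (1:ℝ) ≤ y := hy; intro h; simp [h] at this; linarith)
    · rw [interior_Ici]
      intro y hy
      exact (hderiv y hy).differentiableAt.differentiableWithinAt
    · rw [interior_Ici]
      intro y hy
      rw [(hderiv y hy).deriv]
      have hy1 : (1:ℝ) < y := hy
      have hy0 : (0:ℝ) < y := by linarith
      have h1 : (0:ℝ) < y ^ 2 := by positivity
      have : (1 - -(y ^ 2)⁻¹) / 2 - y⁻¹ = (y - 1) ^ 2 / (2 * y ^ 2) := by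
        field_simp; ring
      rw [this]; positivity
  have h := key (Set.self_mem_Ici) (Set.mem_Ici.mpr hx) hx
  simp only [Real.log_one, inv_one] at h
  linarith

lemma logB {x : ℝ} (hx : 1 ≤ x) : 2 * (x - 1) / (x + 1) ≤ Real.log x := by
  have key : MonotoneOn (fun y : ℝ => Real.log y - 2 * (y - 1) / (y + 1)) (Set.Ici 1) := by
    have hderiv : ∀ y ∈ Set.Ioi (1:ℝ), HasDerivAt (fun y : ℝ => Real.log y - 2 * (y - 1) / (y + 1))
        (y⁻¹ - (2 * (y + 1) - 2 * (y - 1) * 1) / (y + 1) ^ 2) y := by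
      intro y hy
      have hy1 : (1:ℝ) < y := hy
      have hy0 : y ≠ 0 := by linarith
      have hy1' : y + 1 ≠ 0 := by linarith
      refine (Real.hasDerivAt_log hy0).sub ?_
      have h1 : HasDerivAt (fun y : ℝ => 2 * (y - 1)) 2 y := by
        simpa using ((hasDerivAt_id y).sub_const 1).const_mul 2
      have h2 : HasDerivAt (fun y : ℝ => y + 1) 1 y := (hasDerivAt_id y).add_const 1
      exact h1.div h2 hy1'
    apply monotoneOn_of_deriv_nonneg (convex_Ici 1)
    · apply ContinuousOn.sub
      · exact Real.continuousOn_log.mono (by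
          intro y hy; simp only [Set.mem_compl_iff, Set.mem_singleton_iff]
          have : (1:ℝ) ≤ y := hy; intro h; simp [h] at this; linarith)
      · apply ContinuousOn.div (by fun_prop) (by fun_prop)
        intro y hy; have : (1:ℝ) ≤ y := hy; intro h; linarith
    · rw [interior_Ici]
      intro y hy
      exact (hderiv y hy).differentiableAt.differentiableWithinAt
    · rw [interior_Ici]
      intro y hy
      rw [(hderiv y hy).deriv]
      have hy1 : (1:ℝ) < y := hy
      have hy0 : (0:ℝ) < y := by linarith
      have h1 : (0:ℝ) < (y + 1) ^ 2 := by positivity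
      have : y⁻¹ - (2 * (y + 1) - 2 * (y - 1) * 1) / (y + 1) ^ 2
          = (y - 1) ^ 2 / (y * (y + 1) ^ 2) := by
        field_simp; ring
      rw [this]; positivity
  have h := key (Set.self_mem_Ici) (Set.mem_Ici.mpr hx) hx
  simp only [Real.log_one] at h
  linarith

lemma keyPt (p q δ : ℝ) (hδ : 0 < δ) (hδp : δ ≤ p) (hδq : δ ≤ q) :
    p * Real.log (p / q) ≤ (p - q) + (p - q) ^ 2 / (2 * δ) := by
  have hp : 0 < p := lt_of_lt_of_le hδ hδp
  have hq : 0 < q := lt_of_lt_of_le hδ hδq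
  rcases le_or_gt q p with h | h
  · -- p ≥ q : use log x ≤ (x - x⁻¹)/2 with x = p/q
    have hx : 1 ≤ p / q := (one_le_div hq).mpr h
    have hA := logA hx
    have h2 : p * Real.log (p / q) ≤ p * ((p / q - (p / q)⁻¹) / 2) :=
      mul_le_mul_of_nonneg_left hA hp.le
    have h3 : p * ((p / q - (p / q)⁻¹) / 2) = (p - q) + (p - q) ^ 2 / (2 * q) := by
      field_simp; ring
    have h4 : (p - q) ^ 2 / (2 * q) ≤ (p - q) ^ 2 / (2 * δ) := by
      apply div_le_div_of_nonneg_left (by positivity) (by positivity) (by linarith)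
    linarith
  · -- p < q : use log y ≥ 2(y-1)/(y+1) with y = q/p
    have hx : 1 ≤ q / p := (one_le_div hp).mpr h.le
    have hB := logB hx
    have hlog : Real.log (p / q) = -Real.log (q / p) := by
      rw [← Real.log_inv]; congr 1; field_simp
    rw [hlog]
    have h2 : p * -Real.log (q / p) ≤ p * -(2 * (q / p - 1) / (q / p + 1)) := by
      apply mul_le_mul_of_nonneg_left (by linarith) hp.le
    have h3 : p * -(2 * (q / p - 1) / (q / p + 1)) = (p - q) + (q - p) ^ 2 / (p + q) := by
      have hpq : p + q ≠ 0 := by positivity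
      field_simp; ring
    have h4 : (q - p) ^ 2 / (p + q) ≤ (p - q) ^ 2 / (2 * δ) := by
      have e : (q - p) ^ 2 = (p - q) ^ 2 := by ring
      rw [e]
      apply div_le_div_of_nonneg_left (by positivity) (by positivity) (by linarith)
    linarith

theorem stmt7 {A : Type*} [Fintype A] (P₀ P₁ : A → ℝ) (ε δ : ℝ)
    (hε : 0 < ε) (hδ0 : 0 < δ) (hεδ : 10 * ε < δ)
    (hP₀0 : ∀ m, 0 ≤ P₀ m) (hP₁0 : ∀ m, 0 ≤ P₁ m)
    (hP₀1 : ∑ m, P₀ m = 1) (hP₁1 : ∑ m, P₁ m = 1)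
    (hsupp : ∀ m, P₀ m = 0 ↔ P₁ m = 0)
    (hl1 : ∑ m, |P₁ m - P₀ m| ≤ ε)
    (hδ : ∀ m, P₁ m ≠ P₀ m → δ ≤ P₀ m ∧ δ ≤ P₁ m) :
    ∑ m, P₀ m * Real.logb 2 (P₀ m / P₁ m) ≤ 0.79 * ε ^ 2 / δ := by
  -- bound each term of the natural-log sum
  have hterm : ∀ m, P₀ m * Real.log (P₀ m / P₁ m)
      ≤ (P₀ m - P₁ m) + (P₀ m - P₁ m) ^ 2 / (2 * δ) := by
    intro m
    by_cases hne : P₁ m = P₀ m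
    · rw [hne]
      by_cases h0 : P₀ m = 0
      · simp [h0]
      · rw [div_self h0]; simp
    · obtain ⟨h1, h2⟩ := hδ m hne
      exact keyPt _ _ _ hδ0 h1 h2
  have hsum : ∑ m, P₀ m * Real.log (P₀ m / P₁ m)
      ≤ ∑ m, ((P₀ m - P₁ m) + (P₀ m - P₁ m) ^ 2 / (2 * δ)) :=
    Finset.sum_le_sum fun m _ => hterm m
  have hzero : ∑ m, (P₀ m - P₁ m) = 0 := by
    rw [Finset.sum_sub_distrib, hP₀1, hP₁1]; ring
  have hsq : ∑ m, (P₀ m - P₁ m) ^ 2 ≤ ε ^ 2 := by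
    have h1 : ∑ m, (P₀ m - P₁ m) ^ 2 ≤ (∑ m, |P₁ m - P₀ m|) ^ 2 := by
      rw [sq (∑ m, |P₁ m - P₀ m|), Finset.sum_mul]
      apply Finset.sum_le_sum
      intro m _
      have e : (P₀ m - P₁ m) ^ 2 = |P₁ m - P₀ m| * |P₁ m - P₀ m| := by
        rw [abs_mul_abs_self]; ring
      rw [e]
      refine mul_le_mul_of_nonneg_left ?_ (abs_nonneg _)
      exact Finset.single_le_sum (f := fun i => |P₁ i - P₀ i|)
        (fun i _ => abs_nonneg _) (Finset.mem_univ m)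
    have h2 : (∑ m, |P₁ m - P₀ m|) ^ 2 ≤ ε ^ 2 := by
      apply sq_le_sq' _ hl1
      have : 0 ≤ ∑ m, |P₁ m - P₀ m| := Finset.sum_nonneg fun i _ => abs_nonneg _
      linarith
    linarith
  have hS : ∑ m, P₀ m * Real.log (P₀ m / P₁ m) ≤ ε ^ 2 / (2 * δ) := by
    have : ∑ m, ((P₀ m - P₁ m) + (P₀ m - P₁ m) ^ 2 / (2 * δ))
        = (∑ m, (P₀ m - P₁ m) ^ 2) / (2 * δ) := by
      rw [Finset.sum_add_distrib, hzero, zero_add, ← Finset.sum_div]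
    rw [this] at hsum
    refine hsum.trans ?_
    gcongr
  have hlog2 : (0:ℝ) < Real.log 2 := Real.log_pos one_lt_two
  have hrw : ∑ m, P₀ m * Real.logb 2 (P₀ m / P₁ m)
      = (∑ m, P₀ m * Real.log (P₀ m / P₁ m)) / Real.log 2 := by
    rw [Finset.sum_div]
    apply Finset.sum_congr rfl
    intro m _
    rw [Real.logb, mul_div_assoc]
  rw [hrw]
  have step1 : (∑ m, P₀ m * Real.log (P₀ m / P₁ m)) / Real.log 2
      ≤ (ε ^ 2 / (2 * δ)) / Real.log 2 := by gcongr
  refine step1.trans ?_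
  rw [div_div, div_le_div_iff₀ (by positivity) hδ0]
  have hl := Real.log_two_gt_d9
  have hpos : (0:ℝ) < ε ^ 2 * δ := by positivity
  nlinarith [mul_lt_mul_of_pos_left hl hpos]
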